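/- Let φ = Q_1 x_1 Q_2 x_2 ⋯ Q_n x_n (C_1 ∧ ⋯ ∧ C_m) be a closed quantified Boolean formula with Q_i ∈ {∃,∀} and each C_j a disjunction of exactly three literals over the variables x_1,…,x_n. Define the TBox T_φ, all of whose concepts use only the Boolean operators ⊤ and ⊥ (the nullary constants true and false), using atomic concepts d_0,…,d_n, x_1,…,x_n, x_1',…,x_n', C_1,…,C_m, C_1',…,C_m', f, f' and roles S, R_1,…,R_n, R_{x_1},…,R_{x_n}, R_{d_0},…,R_{d_n}, R_{C_1},…,R_{C_m}, F, and P_{1j}, P_{2j} for 1 ≤ j ≤ m. For a literal ℓ, let ℓ~ denote the atomic concept x_i' if ℓ = x_i and the atomic concept x_i if ℓ = ¬x_i. T_φ consists of the axioms: (1) ⊤ ⊑ ∃S.d_0; (2) x_i ≡ ∃R_{x_i}.⊤ and x_i' ≡ ∀R_{x_i}.⊥ for 1 ≤ i ≤ n; (3) d_i ⊑ ∃R_{i+1}.x_{i+1} and d_i ⊑ ∃R_{i+1}.x_{i+1}' for 0 ≤ i < n; (4) d_i ⊑ ∀R_{i+1}.d_{i+1} for 0 ≤ i < n, together with d_i ⊑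 ∃R_{d_i}.⊤ and d_j ⊑ ∀R_{d_i}.⊥ for all 0 ≤ i < j ≤ n; (5) x_i ⊑ ∀R_j.x_i and x_i' ⊑ ∀R_j.x_i' for 1 ≤ i < j ≤ n; (6) for each clause C_j = ℓ_{1j} ∨ ℓ_{2j} ∨ ℓ_{3j}: ℓ~_{1j} ⊑ ∃P_{1j}.⊤, ℓ~_{2j} ⊑ ∀P_{1j}.ℓ~_{2j}, ∃P_{1j}.ℓ~_{2j} ⊑ ∃P_{2j}.⊤, ℓ~_{3j} ⊑ ∀P_{2j}.ℓ~_{3j}, and ∃P_{2j}.ℓ~_{3j} ⊑ C_j'; (7) C_j' ⊑ f for 1 ≤ j ≤ m; (8) f ⊑ ∃F.⊤ and f' ⊑ ∀F.⊥; (9) C_j ≡ ∃R_{C_j}.⊤ and C_j' ≡ ∀R_{C_j}.⊥ for 1 ≤ j ≤ m; (10) d_0 ⊑ Q_1 R_1.Q_2 R_2.⋯ Q_n R_n.f', where Q_i R_i. stands for ∃R_i. if Q_i = ∃ and for ∀R_i. if Q_i = ∀. Then φ evaluates to true if and only if T_φ is satisfiable. -/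

import Mathlib

/-- A Boolean operator: an arity `n` together with a Boolean function `Bool^n → Bool`. -/
abbrev BOp : Type := Σ n : ℕ, (Fin n → Bool) → Bool

/-- Concepts over the full signature: atomic concepts and roles are indexed by `ℕ`;
`app o cs` applies the Boolean operator `o` to `o.1` many argument concepts. -/
inductive DLConcept : Type where
  | atom : ℕ → DLConcept
  | app : (o : BOp) → (Fin o.1 → DLConcept) → DLConcept
  | ex : ℕ → DLConcept → DLConcept
  | all : ℕ → DLConcept → DLConcept

/-- An interpretation: a nonempty domain `Δ`, a subset of `Δ` for each atomic concept,
a binary relation for each role, and an element for each individual name. -/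
structure DLInterp (Δ : Type) where
  ne : Nonempty Δ
  atom : ℕ → Set Δ
  role : ℕ → Set (Δ × Δ)
  ind : ℕ → Δ

attribute [local instance] Classical.propDecidable

/-- Semantics of concepts. -/
noncomputable def DLConcept.sem {Δ : Type} (I : DLInterp Δ) : DLConcept → Set Δ
  | .atom A => I.atom A
  | .app o cs => {x | o.2 (fun i => decide (x ∈ DLConcept.sem I (cs i))) = true}
  | .ex R C => {x | ∃ y, (x, y) ∈ I.role R ∧ y ∈ DLConcept.sem I C}
  | .all R C => {x | ∀ y, (x, y) ∈ I.role R → y ∈ DLConcept.sem I C}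

/-- `C.over B` : the concept `C` uses only Boolean operators from `B`. -/
def DLConcept.over (B : Set BOp) : DLConcept → Prop
  | .atom _ => True
  | .app o cs => o ∈ B ∧ ∀ i, DLConcept.over B (cs i)
  | .ex _ C => DLConcept.over B C
  | .all _ C => DLConcept.over B C

/-- Satisfaction of a GCI `C ⊑ D`. -/
def satGCI {Δ : Type} (I : DLInterp Δ) (C D : DLConcept) : Prop := C.sem I ⊆ D.sem I

/-- A TBox is a finite list of GCIs; satisfaction of a TBox. -/
def satTBox {Δ : Type} (I : DLInterp Δ) (T : List (DLConcept × DLConcept)) : Prop :=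
  ∀ p ∈ T, satGCI I p.1 p.2

/-- TBox satisfiability. -/
def TBoxSat (T : List (DLConcept × DLConcept)) : Prop :=
  ∃ (Δ : Type) (I : DLInterp Δ), satTBox I T

/-- The nullary operator `⊤` (constant true) and the concept it denotes. -/
def topOp : BOp := ⟨0, fun _ => true⟩
def ctop : DLConcept := .app topOp (fun i => i.elim0)

/-- The nullary operator `⊥` (constant false) and the concept it denotes. -/
def botOp : BOp := ⟨0, fun _ => false⟩
def cbot : DLConcept := .app botOp (fun i => i.elim0)

/-- The unary negation operator and negated concepts. -/
def negOp : BOp := ⟨1, fun v => !(v 0)⟩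
def cneg (C : DLConcept) : DLConcept := .app negOp (fun _ => C)

/-! ### Quantified Boolean formulas in 3-CNF

Variables are `x_0, …, x_{n-1}` (zero-based; the paper's `x_{i+1}` is our `x_i`).
A literal is a pair `(v, sign)` with `sign = true` for the positive literal. -/

/-- Evaluation of a literal under an assignment `σ : ℕ → Bool`. -/
def litEval {n : ℕ} (σ : ℕ → Bool) (l : Fin n × Bool) : Bool :=
  if l.2 then σ l.1.val else !(σ l.1.val)

/-- Evaluation of the 3-CNF matrix `C_1 ∧ ⋯ ∧ C_m` under an assignment. -/
def matrixEval {n m : ℕ}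
    (Cl : Fin m → (Fin n × Bool) × (Fin n × Bool) × (Fin n × Bool))
    (σ : ℕ → Bool) : Prop :=
  ∀ j : Fin m,
    (litEval σ (Cl j).1 || litEval σ (Cl j).2.1 || litEval σ (Cl j).2.2) = true

/-- Evaluation of the quantifier prefix (`true` = `∃`, `false` = `∀`), binding the
variables `i, i+1, …` in order, over the matrix `ψ`. -/
def qbfEval : List Bool → ℕ → ((ℕ → Bool) → Prop) → (ℕ → Bool) → Prop
  | [], _, ψ, σ => ψ σ
  | q :: qs, i, ψ, σ =>
      if q then ∃ b, qbfEval qs (i + 1) ψ (Function.update σ i b)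
      else ∀ b, qbfEval qs (i + 1) ψ (Function.update σ i b)

/-! ### Names of the atomic concepts and roles used by `T_φ`
(pairwise distinct by the choice of residues). -/

def dA (i : ℕ) : ℕ := 7 * i       -- level concepts d_0, …, d_n
def xpA (i : ℕ) : ℕ := 7 * i + 1  -- variable concepts x_{i+1}
def xmA (i : ℕ) : ℕ := 7 * i + 2  -- complementary variable concepts x_{i+1}'
def cpA (j : ℕ) : ℕ := 7 * j + 3  -- clause concepts C_{j+1}
def cmA (j : ℕ) : ℕ := 7 * j + 4  -- complementary clause concepts C_{j+1}'
def fA : ℕ := 5                   -- concept f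
def fA' : ℕ := 6                  -- concept f'

def rS : ℕ := 6                   -- role S
def rF : ℕ := 7                   -- role F
def rR (i : ℕ) : ℕ := 8 * i       -- roles R_{i+1}
def rX (i : ℕ) : ℕ := 8 * i + 1   -- roles R_{x_{i+1}}
def rD (i : ℕ) : ℕ := 8 * i + 2   -- roles R_{d_i}
def rC (j : ℕ) : ℕ := 8 * j + 3   -- roles R_{C_{j+1}}
def rP1 (j : ℕ) : ℕ := 8 * j + 4  -- roles P_{1,j+1}
def rP2 (j : ℕ) : ℕ := 8 * j + 5  -- roles P_{2,j+1}

/-- `ℓ~`: the atomic concept `x_i'` if `ℓ = x_i`, and `x_i` if `ℓ = ¬x_i`. -/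
def til {n : ℕ} (l : Fin n × Bool) : DLConcept :=
  if l.2 then .atom (xmA l.1.val) else .atom (xpA l.1.val)

/-- `C ≡ D` as the two GCIs `C ⊑ D` and `D ⊑ C`. -/
def eqAx (C D : DLConcept) : List (DLConcept × DLConcept) := [(C, D), (D, C)]

/-- `Q_1 R_1.Q_2 R_2.⋯Q_n R_n.base` where `∃R.` is used for `true` and `∀R.` for `false`. -/
def quantChain : List (Bool × ℕ) → DLConcept → DLConcept
  | [], base => base
  | (q, r) :: rest, base =>
      if q then .ex r (quantChain rest base) else .all r (quantChain rest base)

/-- The TBox `T_φ` of STATEMENT 15, for `φ = Q_1 x_1 ⋯ Q_n x_n (C_1 ∧ ⋯ ∧ C_m)`. -/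
def Tphi (n m : ℕ) (Q : Fin n → Bool)
    (Cl : Fin m → (Fin n × Bool) × (Fin n × Bool) × (Fin n × Bool)) :
    List (DLConcept × DLConcept) :=
  -- (1) ⊤ ⊑ ∃S.d_0
  [(ctop, .ex rS (.atom (dA 0)))]
  -- (2) x_i ≡ ∃R_{x_i}.⊤ and x_i' ≡ ∀R_{x_i}.⊥
  ++ (List.ofFn fun i : Fin n =>
        eqAx (.atom (xpA i.val)) (.ex (rX i.val) ctop) ++
        eqAx (.atom (xmA i.val)) (.all (rX i.val) cbot)).flatten
  -- (3) d_i ⊑ ∃R_{i+1}.x_{i+1} and d_i ⊑ ∃R_{i+1}.x_{i+1}'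
  ++ (List.ofFn fun i : Fin n =>
        [(DLConcept.atom (dA i.val), DLConcept.ex (rR i.val) (.atom (xpA i.val))),
         (DLConcept.atom (dA i.val), DLConcept.ex (rR i.val) (.atom (xmA i.val)))]).flatten
  -- (4) d_i ⊑ ∀R_{i+1}.d_{i+1}
  ++ (List.ofFn fun i : Fin n =>
        (DLConcept.atom (dA i.val), DLConcept.all (rR i.val) (.atom (dA (i.val + 1)))))
  -- (4) d_i ⊑ ∃R_{d_i}.⊤ and d_j ⊑ ∀R_{d_i}.⊥ for 0 ≤ i < j ≤ n
  ++ ((List.range (n + 1)).flatMap fun i => (List.range (n + 1)).flatMap fun j =>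
        if i < j then
          [(DLConcept.atom (dA i), DLConcept.ex (rD i) ctop),
           (DLConcept.atom (dA j), DLConcept.all (rD i) cbot)]
        else [])
  -- (5) x_i ⊑ ∀R_j.x_i and x_i' ⊑ ∀R_j.x_i' for 1 ≤ i < j ≤ n
  ++ ((List.range n).flatMap fun i => (List.range n).flatMap fun j =>
        if i < j then
          [(DLConcept.atom (xpA i), DLConcept.all (rR j) (.atom (xpA i))),
           (DLConcept.atom (xmA i), DLConcept.all (rR j) (.atom (xmA i)))]
        else [])
  -- (6) clause axioms for C_j = ℓ_{1j} ∨ ℓ_{2j} ∨ ℓ_{3j}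
  ++ (List.ofFn fun j : Fin m =>
        [(til (Cl j).1, DLConcept.ex (rP1 j.val) ctop),
         (til (Cl j).2.1, DLConcept.all (rP1 j.val) (til (Cl j).2.1)),
         (DLConcept.ex (rP1 j.val) (til (Cl j).2.1), DLConcept.ex (rP2 j.val) ctop),
         (til (Cl j).2.2, DLConcept.all (rP2 j.val) (til (Cl j).2.2)),
         (DLConcept.ex (rP2 j.val) (til (Cl j).2.2), DLConcept.atom (cmA j.val))]).flatten
  -- (7) C_j' ⊑ f
  ++ (List.ofFn fun j : Fin m => (DLConcept.atom (cmA j.val), DLConcept.atom fA))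
  -- (8) f ⊑ ∃F.⊤ and f' ⊑ ∀F.⊥
  ++ [(DLConcept.atom fA, DLConcept.ex rF ctop),
      (DLConcept.atom fA', DLConcept.all rF cbot)]
  -- (9) C_j ≡ ∃R_{C_j}.⊤ and C_j' ≡ ∀R_{C_j}.⊥
  ++ (List.ofFn fun j : Fin m =>
        eqAx (.atom (cpA j.val)) (.ex (rC j.val) ctop) ++
        eqAx (.atom (cmA j.val)) (.all (rC j.val) cbot)).flatten
  -- (10) d_0 ⊑ Q_1 R_1.Q_2 R_2.⋯Q_n R_n.f'
  ++ [(DLConcept.atom (dA 0),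
       quantChain (List.ofFn fun i : Fin n => (Q i, rR i.val)) (.atom fA'))]

/-! ### Auxiliary development for `stmt_15` -/

namespace Stmt15Aux

/-! #### Generic semantics lemmas -/

lemma mem_ctop {Δ : Type} (I : DLInterp Δ) (x : Δ) : x ∈ ctop.sem I := by
  show topOp.2 _ = true
  rfl

lemma not_mem_cbot {Δ : Type} (I : DLInterp Δ) (x : Δ) : x ∉ cbot.sem I := by
  intro h
  have : botOp.2 (fun i => decide (x ∈ DLConcept.sem I ((fun i : Fin 0 => i.elim0) i))) = true := h
  simp [botOp] at this

lemma sem_atom {Δ : Type} (I : DLInterp Δ) (a : ℕ) :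
    (DLConcept.atom a).sem I = I.atom a := rfl

lemma mem_ex {Δ : Type} (I : DLInterp Δ) (R : ℕ) (C : DLConcept) (x : Δ) :
    x ∈ (DLConcept.ex R C).sem I ↔ ∃ y, (x, y) ∈ I.role R ∧ y ∈ C.sem I := Iff.rfl

lemma mem_all {Δ : Type} (I : DLInterp Δ) (R : ℕ) (C : DLConcept) (x : Δ) :
    x ∈ (DLConcept.all R C).sem I ↔ ∀ y, (x, y) ∈ I.role R → y ∈ C.sem I := Iff.rfl

@[simp] lemma quantChain_nil (base : DLConcept) : quantChain [] base = base := rfl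

@[simp] lemma quantChain_cons_true (r : ℕ) (rest : List (Bool × ℕ)) (base : DLConcept) :
    quantChain ((true, r) :: rest) base = .ex r (quantChain rest base) := by
  simp [quantChain]

@[simp] lemma quantChain_cons_false (r : ℕ) (rest : List (Bool × ℕ)) (base : DLConcept) :
    quantChain ((false, r) :: rest) base = .all r (quantChain rest base) := by
  simp [quantChain]

/-! #### Clause helpers -/

variable {n m : ℕ}

def L1 (Cl : Fin m → (Fin n × Bool) × (Fin n × Bool) × (Fin n × Bool)) (j : ℕ) (σ : ℕ → Bool) : Bool :=
  if h : j < m then litEval σ (Cl ⟨j, h⟩).1 else true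

def L2 (Cl : Fin m → (Fin n × Bool) × (Fin n × Bool) × (Fin n × Bool)) (j : ℕ) (σ : ℕ → Bool) : Bool :=
  if h : j < m then litEval σ (Cl ⟨j, h⟩).2.1 else true

def L3 (Cl : Fin m → (Fin n × Bool) × (Fin n × Bool) × (Fin n × Bool)) (j : ℕ) (σ : ℕ → Bool) : Bool :=
  if h : j < m then litEval σ (Cl ⟨j, h⟩).2.2 else true

def cval (Cl : Fin m → (Fin n × Bool) × (Fin n × Bool) × (Fin n × Bool)) (j : ℕ) (σ : ℕ → Bool) : Prop :=
  (L1 Cl j σ || L2 Cl j σ || L3 Cl j σ) = true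

lemma L1_val (Cl : Fin m → (Fin n × Bool) × (Fin n × Bool) × (Fin n × Bool)) (j : Fin m) (σ : ℕ → Bool) :
    L1 Cl j.val σ = litEval σ (Cl j).1 := by simp [L1, j.isLt]

lemma L2_val (Cl : Fin m → (Fin n × Bool) × (Fin n × Bool) × (Fin n × Bool)) (j : Fin m) (σ : ℕ → Bool) :
    L2 Cl j.val σ = litEval σ (Cl j).2.1 := by simp [L2, j.isLt]

lemma L3_val (Cl : Fin m → (Fin n × Bool) × (Fin n × Bool) × (Fin n × Bool)) (j : Fin m) (σ : ℕ → Bool) :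
    L3 Cl j.val σ = litEval σ (Cl j).2.2 := by simp [L3, j.isLt]

lemma matrix_iff (Cl : Fin m → (Fin n × Bool) × (Fin n × Bool) × (Fin n × Bool)) (σ : ℕ → Bool) :
    matrixEval Cl σ ↔ ∀ j : ℕ, cval Cl j σ := by
  constructor
  · intro h j
    unfold cval L1 L2 L3
    by_cases hj : j < m
    · simp only [dif_pos hj]
      exact h ⟨j, hj⟩
    · simp [dif_neg hj]
  · intro h j
    have := h j.val
    unfold cval at this
    rwa [L1_val, L2_val, L3_val] at this

/-! #### The canonical model (forward direction) -/

abbrev QDom : Type := (ℕ → Bool) × ℕ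

def atomI (Cl : Fin m → (Fin n × Bool) × (Fin n × Bool) × (Fin n × Bool)) (a : ℕ) : Set QDom :=
  if a % 7 = 0 then {p | p.2 = a / 7 ∧ ∀ k, a / 7 ≤ k → p.1 k = false}
  else if a % 7 = 1 then {p | p.1 (a / 7) = true}
  else if a % 7 = 2 then {p | p.1 (a / 7) = false}
  else if a % 7 = 3 then {p | cval Cl (a / 7) p.1}
  else if a % 7 = 4 then {p | ¬ cval Cl (a / 7) p.1}
  else if a % 7 = 5 then {p | ¬ matrixEval Cl p.1}
  else {p | matrixEval Cl p.1}

def roleI (Cl : Fin m → (Fin n × Bool) × (Fin n × Bool) × (Fin n × Bool)) (r : ℕ) : Set (QDom × QDom) :=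
  if r % 8 = 0 then
    {pq | pq.1.2 = r / 8 ∧ pq.2.2 = r / 8 + 1 ∧ ∃ b, pq.2.1 = Function.update pq.1.1 (r / 8) b}
  else if r % 8 = 1 then {pq | pq.2 = pq.1 ∧ pq.1.1 (r / 8) = true}
  else if r % 8 = 2 then {pq | pq.2 = pq.1 ∧ pq.1.2 = r / 8}
  else if r % 8 = 3 then {pq | pq.2 = pq.1 ∧ cval Cl (r / 8) pq.1.1}
  else if r % 8 = 4 then {pq | pq.2 = pq.1 ∧ L1 Cl (r / 8) pq.1.1 = false}
  else if r % 8 = 5 then {pq | pq.2 = pq.1 ∧ L1 Cl (r / 8) pq.1.1 = false ∧ L2 Cl (r / 8) pq.1.1 = false}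
  else if r % 8 = 6 then {pq | pq.2 = (fun _ => false, 0)}
  else {pq | pq.2 = pq.1 ∧ ¬ matrixEval Cl pq.1.1}

def modelM (Cl : Fin m → (Fin n × Bool) × (Fin n × Bool) × (Fin n × Bool)) : DLInterp QDom where
  ne := ⟨(fun _ => false, 0)⟩
  atom := atomI Cl
  role := roleI Cl
  ind := fun _ => (fun _ => false, 0)

variable (Cl : Fin m → (Fin n × Bool) × (Fin n × Bool) × (Fin n × Bool))

@[simp] lemma modelM_atom : (modelM Cl).atom = atomI Cl := rfl
@[simp] lemma modelM_role : (modelM Cl).role = roleI Cl := rfl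

@[simp] lemma atomI_d (i : ℕ) :
    atomI Cl (dA i) = {p | p.2 = i ∧ ∀ k, i ≤ k → p.1 k = false} := by
  have h0 : dA i % 7 = 0 := by unfold dA; omega
  have h1 : dA i / 7 = i := by unfold dA; omega
  simp [atomI, h0, h1]

@[simp] lemma atomI_xp (i : ℕ) : atomI Cl (xpA i) = {p | p.1 i = true} := by
  have h0 : xpA i % 7 = 1 := by unfold xpA; omega
  have h1 : xpA i / 7 = i := by unfold xpA; omega
  simp [atomI, h0, h1]

@[simp] lemma atomI_xm (i : ℕ) : atomI Cl (xmA i) = {p | p.1 i = false} := by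
  have h0 : xmA i % 7 = 2 := by unfold xmA; omega
  have h1 : xmA i / 7 = i := by unfold xmA; omega
  simp [atomI, h0, h1]

@[simp] lemma atomI_cp (j : ℕ) : atomI Cl (cpA j) = {p | cval Cl j p.1} := by
  have h0 : cpA j % 7 = 3 := by unfold cpA; omega
  have h1 : cpA j / 7 = j := by unfold cpA; omega
  simp [atomI, h0, h1]

@[simp] lemma atomI_cm (j : ℕ) : atomI Cl (cmA j) = {p | ¬ cval Cl j p.1} := by
  have h0 : cmA j % 7 = 4 := by unfold cmA; omega
  have h1 : cmA j / 7 = j := by unfold cmA; omega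
  simp [atomI, h0, h1]

@[simp] lemma atomI_f : atomI Cl fA = {p | ¬ matrixEval Cl p.1} := by
  simp [atomI, fA]

@[simp] lemma atomI_f' : atomI Cl fA' = {p | matrixEval Cl p.1} := by
  simp [atomI, fA']

@[simp] lemma roleI_R (i : ℕ) :
    roleI Cl (rR i) =
      {pq | pq.1.2 = i ∧ pq.2.2 = i + 1 ∧ ∃ b, pq.2.1 = Function.update pq.1.1 i b} := by
  have h0 : rR i % 8 = 0 := by unfold rR; omega
  have h1 : rR i / 8 = i := by unfold rR; omega
  simp [roleI, h0, h1]

@[simp] lemma roleI_X (i : ℕ) :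
    roleI Cl (rX i) = {pq | pq.2 = pq.1 ∧ pq.1.1 i = true} := by
  have h0 : rX i % 8 = 1 := by unfold rX; omega
  have h1 : rX i / 8 = i := by unfold rX; omega
  simp [roleI, h0, h1]

@[simp] lemma roleI_D (i : ℕ) :
    roleI Cl (rD i) = {pq | pq.2 = pq.1 ∧ pq.1.2 = i} := by
  have h0 : rD i % 8 = 2 := by unfold rD; omega
  have h1 : rD i / 8 = i := by unfold rD; omega
  simp [roleI, h0, h1]

@[simp] lemma roleI_C (j : ℕ) :
    roleI Cl (rC j) = {pq | pq.2 = pq.1 ∧ cval Cl j pq.1.1} := by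
  have h0 : rC j % 8 = 3 := by unfold rC; omega
  have h1 : rC j / 8 = j := by unfold rC; omega
  simp [roleI, h0, h1]

@[simp] lemma roleI_P1 (j : ℕ) :
    roleI Cl (rP1 j) = {pq | pq.2 = pq.1 ∧ L1 Cl j pq.1.1 = false} := by
  have h0 : rP1 j % 8 = 4 := by unfold rP1; omega
  have h1 : rP1 j / 8 = j := by unfold rP1; omega
  simp [roleI, h0, h1]

@[simp] lemma roleI_P2 (j : ℕ) :
    roleI Cl (rP2 j) =
      {pq | pq.2 = pq.1 ∧ L1 Cl j pq.1.1 = false ∧ L2 Cl j pq.1.1 = false} := by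
  have h0 : rP2 j % 8 = 5 := by unfold rP2; omega
  have h1 : rP2 j / 8 = j := by unfold rP2; omega
  simp [roleI, h0, h1]

@[simp] lemma roleI_S : roleI Cl rS = {pq | pq.2 = (fun _ => false, 0)} := by
  simp [roleI, rS]

@[simp] lemma roleI_F : roleI Cl rF = {pq | pq.2 = pq.1 ∧ ¬ matrixEval Cl pq.1.1} := by
  simp [roleI, rF]

lemma til_sem_model (l : Fin n × Bool) (p : QDom) :
    p ∈ (til l).sem (modelM Cl) ↔ litEval p.1 l = false := by
  rcases l with ⟨v, b⟩
  cases b <;>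
    simp [til, litEval, sem_atom, Set.mem_setOf_eq]


/-! #### The quantifier chain -/

def roleList : List Bool → ℕ → List (Bool × ℕ)
  | [], _ => []
  | q :: qs, i => (q, rR i) :: roleList qs (i + 1)

lemma roleList_ofFn :
    ∀ (n : ℕ) (Q : Fin n → Bool) (k : ℕ),
      roleList (List.ofFn Q) k = List.ofFn (fun i : Fin n => (Q i, rR (k + i.val)))
  | 0, Q, k => by simp [roleList]
  | n + 1, Q, k => by
    rw [List.ofFn_succ, List.ofFn_succ]
    show (Q 0, rR k) :: roleList (List.ofFn fun i : Fin n => Q i.succ) (k + 1) = _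
    rw [roleList_ofFn n (fun i => Q i.succ) (k + 1)]
    congr 1
    congr 1
    funext i
    have : k + 1 + (i : ℕ) = k + ((i : ℕ) + 1) := by omega
    simp only [Fin.val_succ, this]

lemma chain_eq (n : ℕ) (Q : Fin n → Bool) :
    (List.ofFn fun i : Fin n => (Q i, rR i.val)) = roleList (List.ofFn Q) 0 := by
  rw [roleList_ofFn]
  simp

lemma fwd_chain :
    ∀ (qs : List Bool) (i : ℕ) (σ : ℕ → Bool),
      qbfEval qs i (matrixEval Cl) σ →
      (σ, i) ∈ DLConcept.sem (modelM Cl) (quantChain (roleList qs i) (.atom fA'))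
  | [], i, σ, h => by
    simpa [roleList, sem_atom, Set.mem_setOf_eq, qbfEval] using h
  | q :: qs, i, σ, h => by
    cases q
    · -- universal
      show (σ, i) ∈ (DLConcept.all (rR i) _).sem (modelM Cl)
      rw [mem_all]
      intro y hy
      rw [modelM_role, roleI_R, Set.mem_setOf_eq] at hy
      obtain ⟨-, hy2, b, hy1⟩ := hy
      have h' := (by simpa [qbfEval] using h : ∀ b : Bool,
        qbfEval qs (i + 1) (matrixEval Cl) (Function.update σ i b)) b
      have := fwd_chain qs (i + 1) (Function.update σ i b) h'
      have hyy : y = (Function.update σ i b, i + 1) := Prod.ext hy1 hy2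
      rwa [hyy]
    · -- existential
      obtain ⟨b, hb⟩ := (by simpa [qbfEval] using h : ∃ b : Bool,
        qbfEval qs (i + 1) (matrixEval Cl) (Function.update σ i b))
      show (σ, i) ∈ (DLConcept.ex (rR i) _).sem (modelM Cl)
      rw [mem_ex]
      refine ⟨(Function.update σ i b, i + 1), ?_, fwd_chain qs (i + 1) _ hb⟩
      rw [modelM_role, roleI_R, Set.mem_setOf_eq]
      exact ⟨rfl, rfl, b, rfl⟩

/-! #### Forward direction: the model satisfies `T_φ` -/

lemma fwd (Q : Fin n → Bool)
    (hq : qbfEval (List.ofFn Q) 0 (matrixEval Cl) (fun _ => false)) :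
    satTBox (modelM Cl) (Tphi n m Q Cl) := by
  simp only [Tphi, satTBox, List.forall_mem_append]
  refine ⟨⟨⟨⟨⟨⟨⟨⟨⟨⟨?_, ?_⟩, ?_⟩, ?_⟩, ?_⟩, ?_⟩, ?_⟩, ?_⟩, ?_⟩, ?_⟩, ?_⟩
  · -- (1) ⊤ ⊑ ∃S.d_0
    intro p hp
    simp only [List.mem_singleton] at hp
    subst hp
    intro x _
    refine ⟨(fun _ => false, 0), ?_, ?_⟩
    · show _ ∈ roleI Cl rS
      rw [roleI_S]
      exact rfl
    · show _ ∈ atomI Cl (dA 0)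
      rw [atomI_d]
      exact ⟨rfl, fun k _ => rfl⟩
  · -- (2) x ≡ ∃R_x.⊤, x' ≡ ∀R_x.⊥
    intro p hp
    rw [List.mem_flatten] at hp
    obtain ⟨l, hl, hpl⟩ := hp
    rw [List.mem_ofFn] at hl
    obtain ⟨i, rfl⟩ := hl
    simp only [eqAx, List.mem_append, List.mem_cons, List.not_mem_nil, or_false] at hpl
    rcases hpl with (rfl | rfl) | (rfl | rfl)
    · intro x hx
      have hx' : x.1 i.val = true := by rw [sem_atom, modelM_atom, atomI_xp] at hx; exact hx
      refine ⟨x, ?_, mem_ctop _ _⟩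
      rw [modelM_role, roleI_X]
      exact ⟨rfl, hx'⟩
    · rintro x ⟨y, hy, -⟩
      rw [modelM_role, roleI_X] at hy
      show x ∈ atomI Cl _
      rw [atomI_xp]
      exact hy.2
    · intro x hx y hy
      rw [sem_atom, modelM_atom, atomI_xm] at hx
      rw [modelM_role, roleI_X] at hy
      rw [Set.mem_setOf_eq] at hx hy
      rw [hx] at hy
      exact absurd hy.2 (by simp)
    · intro x hx
      show x ∈ atomI Cl _
      rw [atomI_xm, Set.mem_setOf_eq]
      by_contra hc
      have hc' : x.1 i.val = true := by
        cases h : x.1 i.val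
        · exact absurd h hc
        · rfl
      exact not_mem_cbot _ x (hx x (by rw [modelM_role, roleI_X]; exact ⟨rfl, hc'⟩))
  · -- (3) d_i ⊑ ∃R_{i+1}.x, d_i ⊑ ∃R_{i+1}.x'
    intro p hp
    rw [List.mem_flatten] at hp
    obtain ⟨l, hl, hpl⟩ := hp
    rw [List.mem_ofFn] at hl
    obtain ⟨i, rfl⟩ := hl
    simp only [List.mem_cons, List.not_mem_nil, or_false] at hpl
    rcases hpl with rfl | rfl
    · intro x hx
      rw [sem_atom, modelM_atom, atomI_d, Set.mem_setOf_eq] at hx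
      refine ⟨(Function.update x.1 i.val true, i.val + 1), ?_, ?_⟩
      · rw [modelM_role, roleI_R]
        exact ⟨hx.1, rfl, true, rfl⟩
      · show _ ∈ atomI Cl _
        rw [atomI_xp, Set.mem_setOf_eq]
        simp
    · intro x hx
      rw [sem_atom, modelM_atom, atomI_d, Set.mem_setOf_eq] at hx
      refine ⟨(Function.update x.1 i.val false, i.val + 1), ?_, ?_⟩
      · rw [modelM_role, roleI_R]
        exact ⟨hx.1, rfl, false, rfl⟩
      · show _ ∈ atomI Cl _
        rw [atomI_xm, Set.mem_setOf_eq]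
        simp
  · -- (4a) d_i ⊑ ∀R_{i+1}.d_{i+1}
    intro p hp
    rw [List.mem_ofFn] at hp
    obtain ⟨i, rfl⟩ := hp
    intro x hx y hy
    rw [sem_atom, modelM_atom, atomI_d, Set.mem_setOf_eq] at hx
    rw [modelM_role, roleI_R, Set.mem_setOf_eq] at hy
    obtain ⟨-, hy2, b, hy1⟩ := hy
    show y ∈ atomI Cl _
    rw [atomI_d, Set.mem_setOf_eq]
    refine ⟨hy2, fun k hk => ?_⟩
    rw [hy1, Function.update_apply, if_neg (by omega)]
    exact hx.2 k (by omega)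
  · -- (4b) rD disjointness
    intro p hp
    rw [List.mem_flatMap] at hp
    obtain ⟨i, -, hp⟩ := hp
    rw [List.mem_flatMap] at hp
    obtain ⟨j, -, hp⟩ := hp
    by_cases hij : i < j
    · rw [if_pos hij] at hp
      simp only [List.mem_cons, List.not_mem_nil, or_false] at hp
      rcases hp with rfl | rfl
      · intro x hx
        rw [sem_atom, modelM_atom, atomI_d, Set.mem_setOf_eq] at hx
        refine ⟨x, ?_, mem_ctop _ _⟩
        rw [modelM_role, roleI_D]
        exact ⟨rfl, hx.1⟩
      · intro x hx y hy
        rw [sem_atom, modelM_atom, atomI_d, Set.mem_setOf_eq] at hx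
        rw [modelM_role, roleI_D, Set.mem_setOf_eq] at hy
        exfalso
        have h1 : x.2 = j := hx.1
        have h2 : x.2 = i := hy.2
        omega
    · rw [if_neg hij] at hp
      simp at hp
  · -- (5) value propagation along R_j
    intro p hp
    rw [List.mem_flatMap] at hp
    obtain ⟨i, -, hp⟩ := hp
    rw [List.mem_flatMap] at hp
    obtain ⟨j, -, hp⟩ := hp
    by_cases hij : i < j
    · rw [if_pos hij] at hp
      simp only [List.mem_cons, List.not_mem_nil, or_false] at hp
      rcases hp with rfl | rfl
      · intro x hx y hy
        rw [sem_atom, modelM_atom, atomI_xp, Set.mem_setOf_eq] at hx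
        rw [modelM_role, roleI_R, Set.mem_setOf_eq] at hy
        obtain ⟨-, -, b, hy1⟩ := hy
        show y ∈ atomI Cl _
        rw [atomI_xp, Set.mem_setOf_eq, hy1, Function.update_apply, if_neg (by omega)]
        exact hx
      · intro x hx y hy
        rw [sem_atom, modelM_atom, atomI_xm, Set.mem_setOf_eq] at hx
        rw [modelM_role, roleI_R, Set.mem_setOf_eq] at hy
        obtain ⟨-, -, b, hy1⟩ := hy
        show y ∈ atomI Cl _
        rw [atomI_xm, Set.mem_setOf_eq, hy1, Function.update_apply, if_neg (by omega)]
        exact hx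
    · rw [if_neg hij] at hp
      simp at hp
  · -- (6) clause axioms
    intro p hp
    rw [List.mem_flatten] at hp
    obtain ⟨l, hl, hpl⟩ := hp
    rw [List.mem_ofFn] at hl
    obtain ⟨j, rfl⟩ := hl
    simp only [List.mem_cons, List.not_mem_nil, or_false] at hpl
    rcases hpl with rfl | rfl | rfl | rfl | rfl
    · intro x hx
      rw [til_sem_model] at hx
      refine ⟨x, ?_, mem_ctop _ _⟩
      rw [modelM_role, roleI_P1]
      exact ⟨rfl, by rw [L1_val]; exact hx⟩
    · intro x hx y hy
      rw [modelM_role, roleI_P1, Set.mem_setOf_eq] at hy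
      have hyx : y = x := hy.1
      rw [hyx]
      exact hx
    · rintro x ⟨y, hy, hy2⟩
      rw [modelM_role, roleI_P1, Set.mem_setOf_eq] at hy
      obtain ⟨hyx, hL1⟩ := hy
      have hyx' : y = x := hyx
      rw [hyx'] at hy2
      rw [til_sem_model] at hy2
      refine ⟨x, ?_, mem_ctop _ _⟩
      rw [modelM_role, roleI_P2]
      exact ⟨rfl, hL1, by rw [L2_val]; exact hy2⟩
    · intro x hx y hy
      rw [modelM_role, roleI_P2, Set.mem_setOf_eq] at hy
      have hyx : y = x := hy.1
      rw [hyx]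
      exact hx
    · rintro x ⟨y, hy, hy3⟩
      rw [modelM_role, roleI_P2, Set.mem_setOf_eq] at hy
      obtain ⟨hyx, hL1, hL2⟩ := hy
      have hyx' : y = x := hyx
      rw [hyx'] at hy3
      rw [til_sem_model] at hy3
      show x ∈ atomI Cl _
      rw [atomI_cm, Set.mem_setOf_eq]
      intro hc
      unfold cval at hc
      rw [hL1, hL2, L3_val Cl j, hy3] at hc
      simp at hc
  · -- (7) C_j' ⊑ f
    intro p hp
    rw [List.mem_ofFn] at hp
    obtain ⟨j, rfl⟩ := hp
    intro x hx
    rw [sem_atom, modelM_atom, atomI_cm, Set.mem_setOf_eq] at hx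
    show x ∈ atomI Cl fA
    rw [atomI_f, Set.mem_setOf_eq]
    intro hm
    exact hx ((matrix_iff Cl x.1).1 hm j.val)
  · -- (8)f ⊑ ∃F.⊤, f' ⊑ ∀F.⊥
    intro p hp
    simp only [List.mem_cons, List.not_mem_nil, or_false] at hp
    rcases hp with rfl | rfl
    · intro x hx
      rw [sem_atom, modelM_atom, atomI_f, Set.mem_setOf_eq] at hx
      refine ⟨x, ?_, mem_ctop _ _⟩
      rw [modelM_role, roleI_F]
      exact ⟨rfl, hx⟩
    · intro x hx y hy
      rw [sem_atom, modelM_atom, atomI_f', Set.mem_setOf_eq] at hx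
      rw [modelM_role, roleI_F, Set.mem_setOf_eq] at hy
      exact absurd hx hy.2
  · -- (9) C ≡ ∃R_C.⊤, C' ≡ ∀R_C.⊥
    intro p hp
    rw [List.mem_flatten] at hp
    obtain ⟨l, hl, hpl⟩ := hp
    rw [List.mem_ofFn] at hl
    obtain ⟨j, rfl⟩ := hl
    simp only [eqAx, List.mem_append, List.mem_cons, List.not_mem_nil, or_false] at hpl
    rcases hpl with (rfl | rfl) | (rfl | rfl)
    · intro x hx
      rw [sem_atom, modelM_atom, atomI_cp, Set.mem_setOf_eq] at hx
      refine ⟨x, ?_, mem_ctop _ _⟩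
      rw [modelM_role, roleI_C]
      exact ⟨rfl, hx⟩
    · rintro x ⟨y, hy, -⟩
      rw [modelM_role, roleI_C, Set.mem_setOf_eq] at hy
      show x ∈ atomI Cl _
      rw [atomI_cp, Set.mem_setOf_eq]
      exact hy.2
    · intro x hx y hy
      rw [sem_atom, modelM_atom, atomI_cm, Set.mem_setOf_eq] at hx
      rw [modelM_role, roleI_C, Set.mem_setOf_eq] at hy
      exact absurd hy.2 hx
    · intro x hx
      show x ∈ atomI Cl _
      rw [atomI_cm, Set.mem_setOf_eq]
      intro hc
      exact not_mem_cbot _ x (hx x (by rw [modelM_role, roleI_C]; exact ⟨rfl, hc⟩))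
  · -- (10) d_0 ⊑ chain
    intro p hp
    simp only [List.mem_singleton] at hp
    subst hp
    intro x hx
    rw [sem_atom, modelM_atom, atomI_d, Set.mem_setOf_eq] at hx
    have hx1 : x.1 = fun _ => false := funext fun k => hx.2 k (Nat.zero_le k)
    have hxx : x = ((fun _ => false : ℕ → Bool), 0) := Prod.ext hx1 hx.1
    rw [hxx, chain_eq]
    exact fwd_chain Cl (List.ofFn Q) 0 (fun _ => false) hq

/-! #### Backward direction -/

lemma bwd {Δ : Type} (Q : Fin n → Bool) (I : DLInterp Δ)
    (h : satTBox I (Tphi n m Q Cl)) :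
    qbfEval (List.ofFn Q) 0 (matrixEval Cl) (fun _ => false) := by
  simp only [Tphi, satTBox, List.forall_mem_append] at h
  obtain ⟨⟨⟨⟨⟨⟨⟨⟨⟨⟨h1, h2⟩, h3⟩, h4⟩, h5⟩, h6⟩, h7⟩, h8⟩, h9⟩, h10⟩, h11⟩ := h
  -- `x_i'` is interpreted as the complement of `x_i`
  have compl : ∀ (i : Fin n) (x : Δ),
      x ∈ (DLConcept.atom (xmA i.val)).sem I ↔ x ∉ (DLConcept.atom (xpA i.val)).sem I := by
    intro i x
    have a1 := h2 (DLConcept.atom (xpA i.val), DLConcept.ex (rX i.val) ctop)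
      (List.mem_flatten.2 ⟨_, List.mem_ofFn.2 ⟨i, rfl⟩, by simp [eqAx]⟩)
    have a2 := h2 (DLConcept.ex (rX i.val) ctop, DLConcept.atom (xpA i.val))
      (List.mem_flatten.2 ⟨_, List.mem_ofFn.2 ⟨i, rfl⟩, by simp [eqAx]⟩)
    have a3 := h2 (DLConcept.atom (xmA i.val), DLConcept.all (rX i.val) cbot)
      (List.mem_flatten.2 ⟨_, List.mem_ofFn.2 ⟨i, rfl⟩, by simp [eqAx]⟩)
    have a4 := h2 (DLConcept.all (rX i.val) cbot, DLConcept.atom (xmA i.val))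
      (List.mem_flatten.2 ⟨_, List.mem_ofFn.2 ⟨i, rfl⟩, by simp [eqAx]⟩)
    constructor
    · intro hm hp
      obtain ⟨y, hy, -⟩ := a1 hp
      exact not_mem_cbot I y (a3 hm y hy)
    · intro hp
      refine a4 ?_
      intro y hy
      exact absurd (a2 ⟨y, hy, mem_ctop I y⟩) hp
  -- the clause chase: a falsified clause plus `f'` is contradictory
  have chase : ∀ (j : Fin m) (e : Δ),
      e ∈ (til (Cl j).1).sem I → e ∈ (til (Cl j).2.1).sem I → e ∈ (til (Cl j).2.2).sem I →
      e ∈ (DLConcept.atom fA').sem I → False := by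
    intro j e ht1 ht2 ht3 hf'
    have b1 := h7 (til (Cl j).1, DLConcept.ex (rP1 j.val) ctop)
      (List.mem_flatten.2 ⟨_, List.mem_ofFn.2 ⟨j, rfl⟩, by simp⟩)
    have b2 := h7 (til (Cl j).2.1, DLConcept.all (rP1 j.val) (til (Cl j).2.1))
      (List.mem_flatten.2 ⟨_, List.mem_ofFn.2 ⟨j, rfl⟩, by simp⟩)
    have b3 := h7 (DLConcept.ex (rP1 j.val) (til (Cl j).2.1), DLConcept.ex (rP2 j.val) ctop)
      (List.mem_flatten.2 ⟨_, List.mem_ofFn.2 ⟨j, rfl⟩, by simp⟩)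
    have b4 := h7 (til (Cl j).2.2, DLConcept.all (rP2 j.val) (til (Cl j).2.2))
      (List.mem_flatten.2 ⟨_, List.mem_ofFn.2 ⟨j, rfl⟩, by simp⟩)
    have b5 := h7 (DLConcept.ex (rP2 j.val) (til (Cl j).2.2), DLConcept.atom (cmA j.val))
      (List.mem_flatten.2 ⟨_, List.mem_ofFn.2 ⟨j, rfl⟩, by simp⟩)
    have b6 := h8 (DLConcept.atom (cmA j.val), DLConcept.atom fA) (List.mem_ofFn.2 ⟨j, rfl⟩)
    have b7 := h9 (DLConcept.atom fA, DLConcept.ex rF ctop) (by simp)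
    have b8 := h9 (DLConcept.atom fA', DLConcept.all rF cbot) (by simp)
    obtain ⟨y, hy, -⟩ := b1 ht1
    have hy2 : y ∈ (til (Cl j).2.1).sem I := b2 ht2 y hy
    obtain ⟨z, hz, -⟩ := b3 ⟨y, hy, hy2⟩
    have hz3 := b4 ht3 z hz
    have hcm := b5 ⟨z, hz, hz3⟩
    have hf := b6 hcm
    obtain ⟨w, hw, -⟩ := b7 hf
    exact not_mem_cbot I w (b8 hf' w hw)
  -- main induction on the quantifier prefix
  have key : ∀ (qs : List Bool) (i : ℕ), i + qs.length = n →
      ∀ (e : Δ) (σ : ℕ → Bool),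
        e ∈ (DLConcept.atom (dA i)).sem I →
        e ∈ (quantChain (roleList qs i) (.atom fA')).sem I →
        (∀ k, k < i → (σ k = true ↔ e ∈ (DLConcept.atom (xpA k)).sem I)) →
        qbfEval qs i (matrixEval Cl) σ := by
    intro qs
    induction qs with
    | nil =>
      intro i hlen e σ _ hc hσ
      have hin : i = n := by simpa using hlen
      show matrixEval Cl σ
      intro j
      by_contra hj
      simp only [Bool.or_eq_true, not_or, Bool.not_eq_true] at hj
      obtain ⟨⟨hl1, hl2⟩, hl3⟩ := hj
      have lt : ∀ l : Fin n × Bool, litEval σ l = false → e ∈ (til l).sem I := by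
        rintro ⟨v, bt⟩ hl
        have hv : (v : ℕ) < i := by omega
        cases bt
        · have hvt : σ v.val = true := by simpa [litEval] using hl
          have := (hσ v.val hv).1 hvt
          simpa [til] using this
        · have hfalse : σ v.val = false := by simpa [litEval] using hl
          have hnp : e ∉ (DLConcept.atom (xpA v.val)).sem I := by
            intro hp
            rw [(hσ v.val hv).2 hp] at hfalse
            cases hfalse
          have := (compl v e).2 hnp
          simpa [til] using this
      exact chase j e (lt _ hl1) (lt _ hl2) (lt _ hl3) (by simpa [roleList] using hc)
    | cons q qs ih =>
      intro i hlen e σ hd hc hσ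
      have hi : i < n := by simp at hlen; omega
      have hlen' : (i + 1) + qs.length = n := by simp at hlen ⊢; omega
      have c4 := h4 (DLConcept.atom (dA i), DLConcept.all (rR i) (.atom (dA (i + 1))))
        (List.mem_ofFn.2 ⟨⟨i, hi⟩, rfl⟩)
      have pres : ∀ k, k < i → ∀ x y : Δ, (x, y) ∈ I.role (rR i) →
          ((x ∈ (DLConcept.atom (xpA k)).sem I → y ∈ (DLConcept.atom (xpA k)).sem I) ∧
           (x ∈ (DLConcept.atom (xmA k)).sem I → y ∈ (DLConcept.atom (xmA k)).sem I)) := by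
        intro k hk x y hxy
        have p1 := h6 (DLConcept.atom (xpA k), DLConcept.all (rR i) (.atom (xpA k)))
          (List.mem_flatMap.2 ⟨k, List.mem_range.2 (by omega),
            List.mem_flatMap.2 ⟨i, List.mem_range.2 hi, by rw [if_pos hk]; simp⟩⟩)
        have p2 := h6 (DLConcept.atom (xmA k), DLConcept.all (rR i) (.atom (xmA k)))
          (List.mem_flatMap.2 ⟨k, List.mem_range.2 (by omega),
            List.mem_flatMap.2 ⟨i, List.mem_range.2 hi, by rw [if_pos hk]; simp⟩⟩)
        exact ⟨fun hx => p1 hx y hxy, fun hx => p2 hx y hxy⟩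
      have trans : ∀ y : Δ, (e, y) ∈ I.role (rR i) → ∀ k, k < i →
          (σ k = true ↔ y ∈ (DLConcept.atom (xpA k)).sem I) := by
        intro y hy k hk
        rw [hσ k (by omega)]
        constructor
        · exact fun hx => (pres k hk e y hy).1 hx
        · intro hyk
          by_contra hek
          have hem := (compl ⟨k, by omega⟩ e).2 hek
          have hym := (pres k hk e y hy).2 hem
          exact (compl ⟨k, by omega⟩ y).1 hym hyk
      cases q
      · -- universal quantifier
        have hc' : e ∈ (DLConcept.all (rR i) (quantChain (roleList qs (i + 1)) (.atom fA'))).sem I := by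
          simpa [roleList] using hc
        have c3p := h3 (DLConcept.atom (dA i), DLConcept.ex (rR i) (.atom (xpA i)))
          (List.mem_flatten.2 ⟨_, List.mem_ofFn.2 ⟨⟨i, hi⟩, rfl⟩, by simp⟩)
        have c3m := h3 (DLConcept.atom (dA i), DLConcept.ex (rR i) (.atom (xmA i)))
          (List.mem_flatten.2 ⟨_, List.mem_ofFn.2 ⟨⟨i, hi⟩, rfl⟩, by simp⟩)
        show qbfEval (false :: qs) i (matrixEval Cl) σ
        simp only [qbfEval, Bool.false_eq_true, if_false]
        intro b
        cases b
        · obtain ⟨y, hy, hyx⟩ := c3m hd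
          refine ih (i + 1) hlen' y (Function.update σ i false) (c4 hd y hy) (hc' y hy) ?_
          intro k hk
          rcases Nat.lt_succ_iff_lt_or_eq.1 hk with hk' | rfl
          · rw [Function.update_apply, if_neg (by omega)]
            exact trans y hy k hk'
          · rw [Function.update_apply, if_pos rfl]
            exact iff_of_false (by simp) ((compl ⟨k, hi⟩ y).1 hyx)
        · obtain ⟨y, hy, hyx⟩ := c3p hd
          refine ih (i + 1) hlen' y (Function.update σ i true) (c4 hd y hy) (hc' y hy) ?_
          intro k hk
          rcases Nat.lt_succ_iff_lt_or_eq.1 hk with hk' | rfl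
          · rw [Function.update_apply, if_neg (by omega)]
            exact trans y hy k hk'
          · rw [Function.update_apply, if_pos rfl]
            exact iff_of_true rfl hyx
      · -- existential quantifier
        have hc' : e ∈ (DLConcept.ex (rR i) (quantChain (roleList qs (i + 1)) (.atom fA'))).sem I := by
          simpa [roleList] using hc
        obtain ⟨y, hy, hyc⟩ := hc'
        show qbfEval (true :: qs) i (matrixEval Cl) σ
        simp only [qbfEval, if_true]
        by_cases hb : y ∈ (DLConcept.atom (xpA i)).sem I
        · refine ⟨true, ih (i + 1) hlen' y (Function.update σ i true) (c4 hd y hy) hyc ?_⟩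
          intro k hk
          rcases Nat.lt_succ_iff_lt_or_eq.1 hk with hk' | rfl
          · rw [Function.update_apply, if_neg (by omega)]
            exact trans y hy k hk'
          · rw [Function.update_apply, if_pos rfl]
            exact iff_of_true rfl hb
        · refine ⟨false, ih (i + 1) hlen' y (Function.update σ i false) (c4 hd y hy) hyc ?_⟩
          intro k hk
          rcases Nat.lt_succ_iff_lt_or_eq.1 hk with hk' | rfl
          · rw [Function.update_apply, if_neg (by omega)]
            exact trans y hy k hk'
          · rw [Function.update_apply, if_pos rfl]
            exact iff_of_false (by simp) hb
  -- kick off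
  obtain ⟨x0⟩ := I.ne
  have hS := h1 (ctop, DLConcept.ex rS (.atom (dA 0))) (by simp)
  obtain ⟨e0, -, he0⟩ := hS (mem_ctop I x0)
  have hchain := h11 (DLConcept.atom (dA 0),
      quantChain (List.ofFn fun i : Fin n => (Q i, rR i.val)) (.atom fA')) (by simp) he0
  rw [chain_eq] at hchain
  exact key (List.ofFn Q) 0 (by simp) e0 (fun _ => false) he0 hchain
    (fun k hk => absurd hk (by omega))

end Stmt15Aux

/-- the closed QBF `φ = Q_1 x_1 ⋯ Q_n x_n (C_1 ∧ ⋯ ∧ C_m)` (in 3-CNF)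
evaluates to true iff the TBox `T_φ` (whose concepts use only the Boolean operators
`⊤` and `⊥`) is satisfiable. -/
theorem stmt_15 (n m : ℕ) (Q : Fin n → Bool)
    (Cl : Fin m → (Fin n × Bool) × (Fin n × Bool) × (Fin n × Bool)) :
    qbfEval (List.ofFn Q) 0 (matrixEval Cl) (fun _ => false) ↔ TBoxSat (Tphi n m Q Cl) := by
  constructor
  · intro hq
    exact ⟨Stmt15Aux.QDom, Stmt15Aux.modelM Cl, Stmt15Aux.fwd Cl Q hq⟩
  · rintro ⟨Δ, I, hI⟩
    exact Stmt15Aux.bwd Cl Q I hI
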